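/- Let U be a unitary operator on a Hilbert space H that finitely propagates with constant b > 0 with respect to a nonnegative self-adjoint operator A, meaning that for all R₁ < R₂ and ψ ∈ Ran E_A([R₁,R₂)), one has Uψ ∈ Ran E_A([R₁−b, R₂+b)). Then for any R > 0, the commutator [U, E_A([R,∞))] satisfies [U, E_A([R,∞))] = −E_A([R,R+b)) U E_A([R−b,R)) + E_A([R−b,R)) U E_A([R,R+b)), where E_A([R−b,R)) is interpreted as E_A([0,R)) when R − b ≤ 0. -/

import Mathlib

noncomputable section

/-- A projection-valued measure on subsets of `α`, acting on a complex Hilbert space `H`. -/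
structure PVM (α : Type*) (H : Type*) [NormedAddCommGroup H] [InnerProductSpace ℂ H]
    [CompleteSpace H] where
  proj : Set α → H →L[ℂ] H
  selfAdj : ∀ S, ContinuousLinearMap.adjoint (proj S) = proj S
  inter : ∀ S T, proj S ∘L proj T = proj (S ∩ T)
  empty : proj ∅ = 0
  univ : proj Set.univ = 1
  countablyAdditive : ∀ f : ℕ → Set α, (Pairwise fun m n => Disjoint (f m) (f n)) →
    ∀ ψ : H, HasSum (fun n => proj (f n) ψ) (proj (⋃ n, f n) ψ)

/-- `U` finitely propagates with constant `b` with respect to the spectral measure `E`: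
it maps the spectral subspace of `[R₁, R₂)` into that of `[R₁ - b, R₂ + b)`. -/
def FinitePropagation {H : Type*} [NormedAddCommGroup H] [InnerProductSpace ℂ H]
    [CompleteSpace H] (U : H →L[ℂ] H) (E : PVM ℝ H) (b : ℝ) : Prop :=
  ∀ R₁ R₂ : ℝ, R₁ < R₂ → ∀ ψ : H, E.proj (Set.Ico R₁ R₂) ψ = ψ →
    E.proj (Set.Ico (R₁ - b) (R₂ + b)) (U ψ) = U ψ

namespace PVM

variable {H : Type*} [NormedAddCommGroup H] [InnerProductSpace ℂ H] [CompleteSpace H]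
  (E : PVM ℝ H)

lemma proj_proj (S T : Set ℝ) (ψ : H) :
    E.proj S (E.proj T ψ) = E.proj (S ∩ T) ψ := by
  rw [← E.inter S T]; rfl

lemma proj_fix (S : Set ℝ) (ψ : H) : E.proj S (E.proj S ψ) = E.proj S ψ := by
  rw [E.proj_proj, Set.inter_self]

lemma add_of_disjoint {S T : Set ℝ} (h : Disjoint S T) (ψ : H) :
    E.proj (S ∪ T) ψ = E.proj S ψ + E.proj T ψ := by
  classical
  set f : ℕ → Set ℝ := fun n => if n = 0 then S else if n = 1 then T else ∅ with hf
  have hpair : Pairwise fun m n => Disjoint (f m) (f n) := by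
    intro m n hmn
    simp only [hf]
    split_ifs with h1 h2 h3 h4 h5 h6 h7 <;>
      first
        | (exfalso; omega)
        | exact h
        | exact h.symm
        | exact Set.disjoint_empty _
        | exact (Set.empty_disjoint _)
  have h1 := E.countablyAdditive f hpair ψ
  have hunion : (⋃ n, f n) = S ∪ T := by
    apply Set.Subset.antisymm
    · intro x hx
      simp only [Set.mem_iUnion] at hx
      obtain ⟨n, hn⟩ := hx
      by_cases h0 : n = 0
      · left; simpa [hf, h0] using hn
      · by_cases h1 : n = 1
        · right; simpa [hf, h1] using hn
        · simp [hf, h0, h1] at hn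
    · intro x hx
      rcases hx with h | h
      · exact Set.mem_iUnion.2 ⟨0, by simpa [hf] using h⟩
      · exact Set.mem_iUnion.2 ⟨1, by simpa [hf] using h⟩
  rw [hunion] at h1
  have h2 : HasSum (fun n => E.proj (f n) ψ) (E.proj S ψ + E.proj T ψ) := by
    have hv : ∀ n ∉ ({0, 1} : Finset ℕ), E.proj (f n) ψ = 0 := by
      intro n hn
      simp only [Finset.mem_insert, Finset.mem_singleton, not_or] at hn
      simp [hf, hn.1, hn.2, E.empty]
    have := hasSum_sum_of_ne_finset_zero (L := SummationFilter.unconditional ℕ) hv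
    rwa [Finset.sum_pair (by norm_num : (0 : ℕ) ≠ 1), show f 0 = S by simp [hf],
      show f 1 = T by simp [hf]] at this
  exact h1.unique h2

lemma proj_zero_of_neg (hpos : E.proj (Set.Iio 0) = 0) {S : Set ℝ}
    (h : S ⊆ Set.Iio 0) (ψ : H) : E.proj S ψ = 0 := by
  have hS : S ∩ Set.Iio 0 = S := Set.inter_eq_self_of_subset_left h
  calc E.proj S ψ = E.proj (S ∩ Set.Iio 0) ψ := by rw [hS]
    _ = E.proj S (E.proj (Set.Iio 0) ψ) := (E.proj_proj _ _ _).symm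
    _ = 0 := by rw [hpos]; simp

lemma decomp (R : ℝ) (x : H) : E.proj (Set.Iio R) x + E.proj (Set.Ici R) x = x := by
  have hd : Disjoint (Set.Iio R) (Set.Ici R) := by
    rw [Set.disjoint_left]
    intro a ha hb
    simp only [Set.mem_Iio] at ha
    simp only [Set.mem_Ici] at hb
    linarith
  have hu : Set.Iio R ∪ Set.Ici R = Set.univ := Set.Iio_union_Ici
  have := E.add_of_disjoint hd x
  rw [hu, E.univ] at this
  simpa using this.symm

lemma tail_zero (U : H →L[ℂ] H) (b : ℝ) (hb : 0 < b) (hprop : FinitePropagation U E b)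
    (R : ℝ) (ψ : H) :
    E.proj (Set.Iio R) (U (E.proj (Set.Ici (R + b)) ψ)) = 0 := by
  set f : ℕ → Set ℝ := fun n => Set.Ico (R + b + n) (R + b + (n + 1)) with hf
  have hlt : ∀ m n : ℕ, m < n → Disjoint (f m) (f n) := by
    intro m n hmn
    rw [Set.disjoint_left]
    rintro x ⟨_, hx2⟩ ⟨hx3, _⟩
    have : (m : ℝ) + 1 ≤ n := by exact_mod_cast hmn
    linarith
  have hpair : Pairwise fun m n => Disjoint (f m) (f n) := by
    intro m n hmn
    rcases lt_or_gt_of_ne hmn with h | h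
    · exact hlt m n h
    · exact (hlt n m h).symm
  have hunion : (⋃ n, f n) = Set.Ici (R + b) := by
    ext x
    simp only [Set.mem_iUnion, Set.mem_Ico, Set.mem_Ici, hf]
    constructor
    · rintro ⟨n, h1, h2⟩
      have : (0 : ℝ) ≤ n := Nat.cast_nonneg n
      linarith
    · intro hx
      refine ⟨⌊x - (R + b)⌋₊, ?_, ?_⟩
      · have := Nat.floor_le (sub_nonneg.2 hx)
        linarith
      · have := Nat.lt_floor_add_one (x - (R + b))
        linarith
  have hterm : ∀ n : ℕ, E.proj (Set.Iio R) (U (E.proj (f n) ψ)) = 0 := by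
    intro n
    have hfix := E.proj_fix (f n) ψ
    have hp := hprop (R + b + n) (R + b + (n + 1)) (by linarith) _ hfix
    have hempty : Set.Iio R ∩ Set.Ico (R + b + ↑n - b) (R + b + (↑n + 1) + b) = ∅ := by
      ext x
      simp only [Set.mem_inter_iff, Set.mem_Iio, Set.mem_Ico, Set.mem_empty_iff_false,
        iff_false, not_and]
      intro h1 h2
      have : (0 : ℝ) ≤ n := Nat.cast_nonneg n
      intro; linarith
    calc E.proj (Set.Iio R) (U (E.proj (f n) ψ))
        = E.proj (Set.Iio R)
            (E.proj (Set.Ico (R + b + ↑n - b) (R + b + (↑n + 1) + b)) (U (E.proj (f n) ψ))) := by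
          rw [hp]
      _ = E.proj (Set.Iio R ∩ Set.Ico (R + b + ↑n - b) (R + b + (↑n + 1) + b))
            (U (E.proj (f n) ψ)) := E.proj_proj _ _ _
      _ = 0 := by rw [hempty, E.empty]; rfl
  have hsum := E.countablyAdditive f hpair ψ
  rw [hunion] at hsum
  have hmap := hsum.mapL (E.proj (Set.Iio R) ∘L U)
  simp only [ContinuousLinearMap.comp_apply, hterm] at hmap
  exact hmap.unique hasSum_zero

end PVM

/-- commutator decomposition
`[U, E_A([R,∞))] = -E_A([R,R+b)) U E_A([R-b,R)) + E_A([R-b,R)) U E_A([R,R+b))`,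
where `E_A([R-b,R))` is interpreted as `E_A([0,R))` when `R - b ≤ 0`. -/
theorem stmt1 {H : Type*} [NormedAddCommGroup H] [InnerProductSpace ℂ H] [CompleteSpace H]
    (U : H →L[ℂ] H) (hU : U ∈ unitary (H →L[ℂ] H))
    (E : PVM ℝ H) (hpos : E.proj (Set.Iio 0) = 0)
    (b : ℝ) (hb : 0 < b) (hprop : FinitePropagation U E b)
    (R : ℝ) (hR : 0 < R) :
    U ∘L E.proj (Set.Ici R) - E.proj (Set.Ici R) ∘L U =
      - (E.proj (Set.Ico R (R + b)) ∘L U ∘L E.proj (Set.Ico (max (R - b) 0) R))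
        + E.proj (Set.Ico (max (R - b) 0) R) ∘L U ∘L E.proj (Set.Ico R (R + b)) := by
  ext ψ
  simp only [ContinuousLinearMap.comp_apply, ContinuousLinearMap.sub_apply,
    ContinuousLinearMap.neg_apply, ContinuousLinearMap.add_apply]
  set m := max (R - b) 0 with hm
  have hm0 : 0 ≤ m := le_max_right _ _
  have hmR : m < R := max_lt (by linarith) hR
  have hmb : R ≤ m + b := by
    have : R - b ≤ m := le_max_left _ _
    linarith
  set φ₁ := E.proj (Set.Ico 0 m) ψ with hφ₁
  set φ₂ := E.proj (Set.Ico m R) ψ with hφ₂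
  set φ₃ := E.proj (Set.Ico R (R + b)) ψ with hφ₃
  set φ₄ := E.proj (Set.Ici (R + b)) ψ with hφ₄
  -- decomposition of E(Ici R) ψ
  have hIci : E.proj (Set.Ici R) ψ = φ₃ + φ₄ := by
    have hu : Set.Ico R (R + b) ∪ Set.Ici (R + b) = Set.Ici R :=
      Set.Ico_union_Ici_eq_Ici (by linarith)
    have hd : Disjoint (Set.Ico R (R + b)) (Set.Ici (R + b)) := by
      rw [Set.disjoint_left]
      rintro x ⟨_, hx2⟩ hx3
      exact absurd hx3 (not_le.2 hx2)
    rw [← hu, E.add_of_disjoint hd]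
  -- decomposition of E(Iio R) ψ
  have hIio : E.proj (Set.Iio R) ψ = φ₁ + φ₂ := by
    have hu1 : Set.Iio 0 ∪ Set.Ico 0 R = Set.Iio R := by
      ext x
      simp only [Set.mem_union, Set.mem_Iio, Set.mem_Ico]
      constructor
      · rintro (h | ⟨_, h⟩) <;> linarith
      · intro h
        rcases lt_or_ge x 0 with h0 | h0
        · exact Or.inl h0
        · exact Or.inr ⟨h0, h⟩
    have hd1 : Disjoint (Set.Iio 0) (Set.Ico 0 R) := by
      rw [Set.disjoint_left]
      rintro x hx ⟨hx2, _⟩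
      exact absurd hx2 (not_le.2 hx)
    have h1 : E.proj (Set.Iio R) ψ = E.proj (Set.Ico 0 R) ψ := by
      rw [← hu1, E.add_of_disjoint hd1]
      simp [hpos]
    have hu2 : Set.Ico 0 m ∪ Set.Ico m R = Set.Ico 0 R :=
      Set.Ico_union_Ico_eq_Ico hm0 hmR.le
    have hd2 : Disjoint (Set.Ico 0 m) (Set.Ico m R) := by
      rw [Set.disjoint_left]
      rintro x ⟨_, hx2⟩ ⟨hx3, _⟩
      exact absurd hx3 (not_le.2 hx2)
    rw [h1, ← hu2, E.add_of_disjoint hd2]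
  have hψsplit : ψ = φ₁ + φ₂ + φ₃ + φ₄ := by
    have := E.decomp R ψ
    rw [hIio, hIci] at this
    rw [← this]; abel
  -- h1 : E(Ici R)(U φ₁) = 0
  have h1 : E.proj (Set.Ici R) (U φ₁) = 0 := by
    rcases le_or_gt m 0 with h0 | h0
    · have : m = 0 := le_antisymm h0 hm0
      rw [hφ₁, this, Set.Ico_self, E.empty]
      simp
    · have hmval : m = R - b := by
        rcases max_cases (R - b) 0 with ⟨h, _⟩ | ⟨h, _⟩
        · rw [hm, h]
        · rw [hm] at h0; rw [h] at h0; exact absurd h0 (lt_irrefl 0)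
      have hfix := E.proj_fix (Set.Ico 0 m) ψ
      have hp := hprop 0 m h0 _ hfix
      have hempty : Set.Ici R ∩ Set.Ico (0 - b) (m + b) = ∅ := by
        ext x
        simp only [Set.mem_inter_iff, Set.mem_Ici, Set.mem_Ico, Set.mem_empty_iff_false,
          iff_false, not_and]
        intro hx1 hx2
        rw [hmval]
        intro hx3
        linarith
      calc E.proj (Set.Ici R) (U φ₁)
          = E.proj (Set.Ici R) (E.proj (Set.Ico (0 - b) (m + b)) (U φ₁)) := by rw [hp]
        _ = E.proj (Set.Ici R ∩ Set.Ico (0 - b) (m + b)) (U φ₁) := E.proj_proj _ _ _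
        _ = 0 := by rw [hempty, E.empty]; rfl
  -- h2 : E(Ici R)(U φ₂) = E(Ico R (R+b))(U φ₂)
  have h2 : E.proj (Set.Ici R) (U φ₂) = E.proj (Set.Ico R (R + b)) (U φ₂) := by
    have hfix := E.proj_fix (Set.Ico m R) ψ
    have hp := hprop m R hmR _ hfix
    have hset : Set.Ici R ∩ Set.Ico (m - b) (R + b) = Set.Ico R (R + b) := by
      ext x
      simp only [Set.mem_inter_iff, Set.mem_Ici, Set.mem_Ico]
      constructor
      · rintro ⟨h1, _, h3⟩; exact ⟨h1, h3⟩
      · rintro ⟨h1, h2⟩; exact ⟨h1, by linarith, h2⟩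
    calc E.proj (Set.Ici R) (U φ₂)
        = E.proj (Set.Ici R) (E.proj (Set.Ico (m - b) (R + b)) (U φ₂)) := by rw [hp]
      _ = E.proj (Set.Ici R ∩ Set.Ico (m - b) (R + b)) (U φ₂) := E.proj_proj _ _ _
      _ = E.proj (Set.Ico R (R + b)) (U φ₂) := by rw [hset]
  -- h3 : E(Iio R)(U φ₃) = E(Ico m R)(U φ₃)
  have h3 : E.proj (Set.Iio R) (U φ₃) = E.proj (Set.Ico m R) (U φ₃) := by
    have hfix := E.proj_fix (Set.Ico R (R + b)) ψ
    have hp := hprop R (R + b) (by linarith) _ hfix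
    have hset : Set.Iio R ∩ Set.Ico (R - b) (R + b + b) = Set.Ico (R - b) R := by
      ext x
      simp only [Set.mem_inter_iff, Set.mem_Iio, Set.mem_Ico]
      constructor
      · rintro ⟨h1, h2, _⟩; exact ⟨h2, h1⟩
      · rintro ⟨h1, h2⟩; exact ⟨h2, h1, by linarith⟩
    have hsplit : E.proj (Set.Ico (R - b) R) (U φ₃) = E.proj (Set.Ico m R) (U φ₃) := by
      have hu : Set.Ico (R - b) m ∪ Set.Ico m R = Set.Ico (R - b) R :=
        Set.Ico_union_Ico_eq_Ico (le_max_left _ _) hmR.le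
      have hd : Disjoint (Set.Ico (R - b) m) (Set.Ico m R) := by
        rw [Set.disjoint_left]
        rintro x ⟨_, hx2⟩ ⟨hx3, _⟩
        exact absurd hx3 (not_le.2 hx2)
      have hz : E.proj (Set.Ico (R - b) m) (U φ₃) = 0 := by
        rcases le_or_gt 0 (R - b) with hc | hc
        · have : m = R - b := max_eq_left (by linarith [hm0] : (0:ℝ) ≤ R - b) ▸ rfl
          have hmeq : m = R - b := by rw [hm, max_eq_left hc]
          rw [hmeq, Set.Ico_self, E.empty]; rfl
        · have hmeq : m = 0 := by rw [hm, max_eq_right hc.le]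
          apply E.proj_zero_of_neg hpos
          rw [hmeq]
          intro x hx
          exact hx.2
      rw [← hu, E.add_of_disjoint hd, hz, zero_add]
    calc E.proj (Set.Iio R) (U φ₃)
        = E.proj (Set.Iio R) (E.proj (Set.Ico (R - b) (R + b + b)) (U φ₃)) := by rw [hp]
      _ = E.proj (Set.Iio R ∩ Set.Ico (R - b) (R + b + b)) (U φ₃) := E.proj_proj _ _ _
      _ = E.proj (Set.Ico (R - b) R) (U φ₃) := by rw [hset]
      _ = E.proj (Set.Ico m R) (U φ₃) := hsplit
  have h3' : E.proj (Set.Ici R) (U φ₃) = U φ₃ - E.proj (Set.Ico m R) (U φ₃) := by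
    have := E.decomp R (U φ₃)
    rw [h3] at this
    exact eq_sub_of_add_eq' this
  -- h4
  have h4 : E.proj (Set.Ici R) (U φ₄) = U φ₄ := by
    have hz := E.tail_zero U b hb hprop R ψ
    rw [← hφ₄] at hz
    have := E.decomp R (U φ₄)
    rw [hz, zero_add] at this
    exact this
  -- assemble
  have hUψ : E.proj (Set.Ici R) (U ψ) =
      E.proj (Set.Ico R (R + b)) (U φ₂) + (U φ₃ - E.proj (Set.Ico m R) (U φ₃)) + U φ₄ := by
    conv_lhs => rw [hψsplit]
    rw [map_add, map_add, map_add, map_add, map_add, map_add, h1, h2, h3', h4, zero_add]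
  rw [hIci, hUψ, map_add]
  abel
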